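/- Let G be a simple graph on n ≥ 2 vertices. Then s(G) = 2n − 3 if and only if G is the complete graph K_n, and s(G) = 2n − 4 if and only if G is K_n with exactly one edge removed. -/
import Mathlib
set_option linter.unusedSectionVars false
set_option maxHeartbeats 1000000

open SimpleGraph Function

def edgePlus {V : Type*} (f : V → ℤ) : Sym2 V → ℤ :=
  Sym2.lift ⟨fun u v => f u + f v, fun u v => by ring⟩

def edgeMinus {V : Type*} (f : V → ℤ) : Sym2 V → ℤ :=
  Sym2.lift ⟨fun u v => |f u - f v|, fun u v => abs_sub_comm _ _⟩

/-- The sum index: the minimum, over injective vertex labelings `f : V → ℤ`,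
of the number of distinct values of `f⁺(uv) = f u + f v` on the edges. -/
noncomputable def sumIndex {V : Type*} (G : SimpleGraph V) : ℕ :=
  sInf {k | ∃ f : V → ℤ, Function.Injective f ∧ (edgePlus f '' G.edgeSet).ncard = k}

/-- The difference index: the minimum, over injective vertex labelings `f : V → ℤ`,
of the number of distinct values of `f⁻(uv) = |f u − f v|` on the edges. -/
noncomputable def diffIndex {V : Type*} (G : SimpleGraph V) : ℕ :=
  sInf {k | ∃ f : V → ℤ, Function.Injective f ∧ (edgeMinus f '' G.edgeSet).ncard = k}

section Aux
variable {V : Type*} [Fintype V] [DecidableEq V]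

lemma edgePlus_mk (f : V → ℤ) (u v : V) : edgePlus f s(u,v) = f u + f v := rfl

lemma sumIndex_le (G : SimpleGraph V) (f : V → ℤ) (hf : Injective f) (k : ℕ)
    (h : (edgePlus f '' G.edgeSet).ncard ≤ k) : sumIndex G ≤ k :=
  le_trans (Nat.sInf_le ⟨f, hf, rfl⟩) h

lemma le_sumIndex (G : SimpleGraph V) (k : ℕ)
    (h : ∀ f : V → ℤ, Injective f → k ≤ (edgePlus f '' G.edgeSet).ncard) : k ≤ sumIndex G := by
  refine le_csInf ⟨_, fun v => ((Fintype.equivFin V v : ℕ) : ℤ), ?_, rfl⟩ ?_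
  · intro u v huv
    simp only at huv
    exact (Fintype.equivFin V).injective (Fin.ext (by exact_mod_cast huv))
  · rintro b ⟨f, hf, rfl⟩
    exact h f hf

lemma chain_lemma (f : V → ℤ) (hf : Injective f) (hn : 2 ≤ Fintype.card V) :
    ∃ T : Finset ℤ, T.card = 2 * Fintype.card V - 3 ∧
      ∀ t ∈ T, ∃ u v : V, u ≠ v ∧ f u + f v = t := by
  classical
  set n := Fintype.card V with hndef
  set S : Finset ℤ := Finset.univ.image f with hSdef
  have hScard : S.card = n := by
    rw [hSdef, Finset.card_image_of_injective _ hf, Finset.card_univ]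
  have hSne : S.Nonempty := by
    rw [← Finset.card_pos, hScard]; omega
  set m := S.min' hSne with hm
  set M := S.max' hSne with hM
  have hmM : m < M := S.min'_lt_max'_of_card (by omega)
  have hMS : M ∈ S := S.max'_mem hSne
  have hmS : m ∈ S := S.min'_mem hSne
  set T1 : Finset ℤ := (S.erase m).image (fun x => m + x) with hT1
  set T2 : Finset ℤ := ((S.erase m).erase M).image (fun x => x + M) with hT2
  have hc1 : T1.card = n - 1 := by
    rw [hT1, Finset.card_image_of_injective _ (add_right_injective m),
      Finset.card_erase_of_mem hmS, hScard]
  have hc2 : T2.card = n - 2 := by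
    rw [hT2, Finset.card_image_of_injective _ (add_left_injective M),
      Finset.card_erase_of_mem (Finset.mem_erase.2 ⟨hmM.ne', hMS⟩),
      Finset.card_erase_of_mem hmS, hScard]
    omega
  have hdisj : Disjoint T1 T2 := by
    rw [Finset.disjoint_left]
    rintro t ht1 ht2
    obtain ⟨x, hx, rfl⟩ := Finset.mem_image.1 ht1
    obtain ⟨y, hy, hxy⟩ := Finset.mem_image.1 ht2
    have hxM : x ≤ M := S.le_max' x (Finset.mem_of_mem_erase hx)
    have hym : m < y := by
      have := S.min'_le y (Finset.mem_of_mem_erase (Finset.mem_of_mem_erase hy))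
      rcases this.lt_or_eq with h | h
      · exact h
      · exact absurd h.symm (Finset.ne_of_mem_erase (Finset.mem_of_mem_erase hy))
    omega
  refine ⟨T1 ∪ T2, ?_, ?_⟩
  · rw [Finset.card_union_of_disjoint hdisj, hc1, hc2]; omega
  · intro t ht
    rcases Finset.mem_union.1 ht with ht | ht
    · obtain ⟨x, hx, rfl⟩ := Finset.mem_image.1 ht
      obtain ⟨v, -, hv⟩ := Finset.mem_image.1 hmS
      obtain ⟨u, -, hu⟩ := Finset.mem_image.1 (Finset.mem_of_mem_erase hx)
      exact ⟨v, u, fun h => (Finset.ne_of_mem_erase hx) (by rw [← hu, ← h, hv]),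
        by rw [hv, hu]⟩
    · obtain ⟨y, hy, rfl⟩ := Finset.mem_image.1 ht
      obtain ⟨v, -, hv⟩ := Finset.mem_image.1 hMS
      obtain ⟨u, -, hu⟩ := Finset.mem_image.1
        (Finset.mem_of_mem_erase (Finset.mem_of_mem_erase hy))
      exact ⟨u, v, fun h => (Finset.ne_of_mem_erase hy) (by rw [← hu, h, hv]),
        by rw [hu, hv]⟩

lemma lb_top (hn : 2 ≤ Fintype.card V) :
    2 * Fintype.card V - 3 ≤ sumIndex (⊤ : SimpleGraph V) := by
  apply le_sumIndex
  intro f hf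
  obtain ⟨T, hcard, hT⟩ := chain_lemma f hf hn
  have hsub : (↑T : Set ℤ) ⊆ edgePlus f '' (⊤ : SimpleGraph V).edgeSet := by
    intro t ht
    obtain ⟨u, v, huv, hsum⟩ := hT t ht
    exact ⟨s(u,v), (SimpleGraph.mem_edgeSet _).2 (by simpa using huv), hsum⟩
  calc 2 * Fintype.card V - 3 = T.card := hcard.symm
    _ = (↑T : Set ℤ).ncard := (Set.ncard_coe_finset _).symm
    _ ≤ _ := Set.ncard_le_ncard hsub ((Set.toFinite _).image _)

lemma lb_del (hn : 2 ≤ Fintype.card V) (e0 : Sym2 V) :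
    2 * Fintype.card V - 4 ≤ sumIndex ((⊤ : SimpleGraph V).deleteEdges {e0}) := by
  apply le_sumIndex
  intro f hf
  obtain ⟨T, hcard, hT⟩ := chain_lemma f hf hn
  have hsub : (↑(T.erase (edgePlus f e0)) : Set ℤ) ⊆
      edgePlus f '' ((⊤ : SimpleGraph V).deleteEdges {e0}).edgeSet := by
    intro t ht
    rw [Finset.mem_coe, Finset.mem_erase] at ht
    obtain ⟨u, v, huv, hsum⟩ := hT t ht.2
    refine ⟨s(u,v), ?_, hsum⟩
    rw [SimpleGraph.mem_edgeSet, SimpleGraph.deleteEdges_adj]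
    refine ⟨by simpa using huv, ?_⟩
    simp only [Set.mem_singleton_iff]
    intro hcontra
    exact ht.1 (by rw [← hcontra, edgePlus_mk, hsum])
  calc 2 * Fintype.card V - 4 ≤ T.card - 1 := by omega
    _ ≤ (T.erase (edgePlus f e0)).card := Finset.pred_card_le_card_erase
    _ = (↑(T.erase (edgePlus f e0)) : Set ℤ).ncard := (Set.ncard_coe_finset _).symm
    _ ≤ _ := Set.ncard_le_ncard hsub ((Set.toFinite _).image _)

lemma swap_step {n : ℕ} (ε : V ≃ Fin n) (c : V) (k : Fin n) :
    ∃ ε' : V ≃ Fin n, ε' c = k ∧ ∀ v, ε v ≠ ε c → ε v ≠ k → ε' v = ε v :=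
  ⟨ε.trans (Equiv.swap (ε c) k), by simp,
    fun v h1 h2 => Equiv.swap_apply_of_ne_of_ne h1 h2⟩

lemma exists_equiv_two (a b : V) (hab : a ≠ b)
    (i j : Fin (Fintype.card V)) (hij : i ≠ j) :
    ∃ ε : V ≃ Fin (Fintype.card V), ε a = i ∧ ε b = j := by
  obtain ⟨ε1, h1a, -⟩ := swap_step (Fintype.equivFin V) a i
  obtain ⟨ε2, h2b, h2⟩ := swap_step ε1 b j
  exact ⟨ε2, by rw [h2 a (by simp [ε1.injective.ne hab]) (h1a ▸ hij)]; exact h1a, h2b⟩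

lemma exists_equiv_three (a b c : V) (hab : a ≠ b) (hac : a ≠ c) (hbc : b ≠ c)
    (i j k : Fin (Fintype.card V)) (hij : i ≠ j) (hik : i ≠ k) (hjk : j ≠ k) :
    ∃ ε : V ≃ Fin (Fintype.card V), ε a = i ∧ ε b = j ∧ ε c = k := by
  obtain ⟨ε2, h2a, h2b⟩ := exists_equiv_two a b hab i j hij
  obtain ⟨ε3, h3c, h3⟩ := swap_step ε2 c k
  refine ⟨ε3, ?_, ?_, h3c⟩
  · rw [h3 a (ε2.injective.ne hac) (h2a ▸ hik)]; exact h2a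
  · rw [h3 b (ε2.injective.ne hbc) (h2b ▸ hjk)]; exact h2b

lemma exists_equiv_four (a b c d : V) (hab : a ≠ b) (hac : a ≠ c) (had : a ≠ d)
    (hbc : b ≠ c) (hbd : b ≠ d) (hcd : c ≠ d)
    (i j k l : Fin (Fintype.card V)) (hij : i ≠ j) (hik : i ≠ k) (hil : i ≠ l)
    (hjk : j ≠ k) (hjl : j ≠ l) (hkl : k ≠ l) :
    ∃ ε : V ≃ Fin (Fintype.card V), ε a = i ∧ ε b = j ∧ ε c = k ∧ ε d = l := by
  obtain ⟨ε3, h3a, h3b, h3c⟩ := exists_equiv_three a b c hab hac hbc i j k hij hik hjk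
  obtain ⟨ε4, h4d, h4⟩ := swap_step ε3 d l
  refine ⟨ε4, ?_, ?_, ?_, h4d⟩
  · rw [h4 a (ε3.injective.ne had) (h3a ▸ hil)]; exact h3a
  · rw [h4 b (ε3.injective.ne hbd) (h3b ▸ hjl)]; exact h3b
  · rw [h4 c (ε3.injective.ne hcd) (h3c ▸ hkl)]; exact h3c

lemma ub_core (G : SimpleGraph V) (ε : V ≃ Fin (Fintype.card V)) (lo hi : ℤ)
    (h : ∀ u v : V, G.Adj u v →
      lo ≤ ((ε u : ℕ) : ℤ) + ((ε v : ℕ) : ℤ) ∧ ((ε u : ℕ) : ℤ) + ((ε v : ℕ) : ℤ) ≤ hi) :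
    sumIndex G ≤ (Finset.Icc lo hi).card := by
  set f : V → ℤ := fun v => ((ε v : ℕ) : ℤ) with hfdef
  have hf : Injective f := by
    intro u v huv
    rw [hfdef] at huv
    simp only at huv
    exact ε.injective (Fin.ext (by exact_mod_cast huv))
  refine sumIndex_le G f hf _ ?_
  have hsub : edgePlus f '' G.edgeSet ⊆ ↑(Finset.Icc lo hi) := by
    rintro t ⟨e, he, rfl⟩
    induction e using Sym2.ind with
    | _ u v =>
      rw [SimpleGraph.mem_edgeSet] at he
      rw [edgePlus_mk, Finset.coe_Icc, Set.mem_Icc]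
      exact h u v he
  calc (edgePlus f '' G.edgeSet).ncard ≤ ((Finset.Icc lo hi : Finset ℤ) : Set ℤ).ncard :=
        Set.ncard_le_ncard hsub (Finset.finite_toSet _)
    _ = (Finset.Icc lo hi).card := Set.ncard_coe_finset _

lemma ub_top (G : SimpleGraph V) (hn : 2 ≤ Fintype.card V) :
    sumIndex G ≤ 2 * Fintype.card V - 3 := by
  set n := Fintype.card V with hndef
  have hcard : (Finset.Icc (1:ℤ) (2*(n:ℤ)-3)).card = 2*n-3 := by
    rw [Int.card_Icc]; omega
  rw [← hcard]
  apply ub_core G (Fintype.equivFin V)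
  intro u v hadj
  set ε := Fintype.equivFin V
  have hεne : (ε u : ℕ) ≠ (ε v : ℕ) := fun h => hadj.ne (ε.injective (Fin.ext h))
  have hu : (ε u : ℕ) < n := (ε u).isLt
  have hv : (ε v : ℕ) < n := (ε v).isLt
  constructor <;> omega

lemma ub_nonedge (G : SimpleGraph V) (hn : 2 ≤ Fintype.card V) (a b : V) (hab : a ≠ b)
    (hnadj : ¬ G.Adj a b) : sumIndex G ≤ 2 * Fintype.card V - 4 := by
  set n := Fintype.card V with hndef
  obtain ⟨ε, hεa, hεb⟩ := exists_equiv_two a b hab ⟨0, by omega⟩ ⟨1, by omega⟩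
    (by simp [Fin.ext_iff])
  have hcard : (Finset.Icc (2:ℤ) (2*(n:ℤ)-3)).card = 2*n-4 := by
    rw [Int.card_Icc]; omega
  rw [← hcard]
  apply ub_core G ε
  intro u v hadj
  have hεne : (ε u : ℕ) ≠ (ε v : ℕ) := fun h => hadj.ne (ε.injective (Fin.ext h))
  have hu : (ε u : ℕ) < n := (ε u).isLt
  have hv : (ε v : ℕ) < n := (ε v).isLt
  have keya : ∀ w : V, (ε w : ℕ) = 0 → w = a := fun w hw =>
    ε.injective (Fin.ext (by simp [hw, hεa]))
  have keyb : ∀ w : V, (ε w : ℕ) = 1 → w = b := fun w hw =>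
    ε.injective (Fin.ext (by simp [hw, hεb]))
  have hsum1 : ¬ ((ε u : ℕ) + (ε v : ℕ) ≤ 1) := by
    intro hle
    rcases (by omega : (ε u:ℕ) = 0 ∧ (ε v:ℕ) = 1 ∨ (ε u:ℕ) = 1 ∧ (ε v:ℕ) = 0) with
      ⟨h1, h2⟩ | ⟨h1, h2⟩
    · obtain rfl : u = a := keya u h1
      obtain rfl : v = b := keyb v h2
      exact hnadj hadj
    · obtain rfl : v = a := keya v h2
      obtain rfl : u = b := keyb u h1
      exact hnadj hadj.symm
  constructor <;> omega

lemma ub_shared (G : SimpleGraph V) (a b c : V) (hab : a ≠ b) (hac : a ≠ c) (hbc : b ≠ c)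
    (h1 : ¬ G.Adj a b) (h2 : ¬ G.Adj a c) : sumIndex G ≤ 2 * Fintype.card V - 5 := by
  set n := Fintype.card V with hndef
  have h3 : 3 ≤ n := by
    have hle := Finset.card_le_univ ({a,b,c} : Finset V)
    have hcc : ({a,b,c} : Finset V).card = 3 := by
      rw [Finset.card_insert_of_notMem (by simp [hab, hac]),
        Finset.card_insert_of_notMem (by simp [hbc]), Finset.card_singleton]
    omega
  obtain ⟨ε, hεa, hεb, hεc⟩ := exists_equiv_three a b c hab hac hbc
    ⟨0, by omega⟩ ⟨1, by omega⟩ ⟨2, by omega⟩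
    (by simp [Fin.ext_iff]) (by simp [Fin.ext_iff]) (by simp [Fin.ext_iff])
  have hcard : (Finset.Icc (3:ℤ) (2*(n:ℤ)-3)).card = 2*n-5 := by
    rw [Int.card_Icc]; omega
  rw [← hcard]
  apply ub_core G ε
  intro u v hadj
  have hεne : (ε u : ℕ) ≠ (ε v : ℕ) := fun h => hadj.ne (ε.injective (Fin.ext h))
  have hu : (ε u : ℕ) < n := (ε u).isLt
  have hv : (ε v : ℕ) < n := (ε v).isLt
  have keya : ∀ w : V, (ε w : ℕ) = 0 → w = a := fun w hw =>
    ε.injective (Fin.ext (by simp [hw, hεa]))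
  have keyb : ∀ w : V, (ε w : ℕ) = 1 → w = b := fun w hw =>
    ε.injective (Fin.ext (by simp [hw, hεb]))
  have keyc : ∀ w : V, (ε w : ℕ) = 2 → w = c := fun w hw =>
    ε.injective (Fin.ext (by simp [hw, hεc]))
  have hsum1 : ¬ ((ε u : ℕ) + (ε v : ℕ) ≤ 2) := by
    intro hle
    rcases (by omega : ((ε u:ℕ) = 0 ∧ (ε v:ℕ) = 1) ∨ ((ε u:ℕ) = 1 ∧ (ε v:ℕ) = 0) ∨
        ((ε u:ℕ) = 0 ∧ (ε v:ℕ) = 2) ∨ ((ε u:ℕ) = 2 ∧ (ε v:ℕ) = 0)) with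
      ⟨hA, hB⟩ | ⟨hA, hB⟩ | ⟨hA, hB⟩ | ⟨hA, hB⟩
    · obtain rfl : u = a := keya u hA
      obtain rfl : v = b := keyb v hB
      exact h1 hadj
    · obtain rfl : v = a := keya v hB
      obtain rfl : u = b := keyb u hA
      exact h1 hadj.symm
    · obtain rfl : u = a := keya u hA
      obtain rfl : v = c := keyc v hB
      exact h2 hadj
    · obtain rfl : v = a := keya v hB
      obtain rfl : u = c := keyc u hA
      exact h2 hadj.symm
  constructor <;> omega

lemma ub_disjoint (G : SimpleGraph V) (a b c d : V) (hab : a ≠ b) (hac : a ≠ c)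
    (had : a ≠ d) (hbc : b ≠ c) (hbd : b ≠ d) (hcd : c ≠ d)
    (h1 : ¬ G.Adj a b) (h2 : ¬ G.Adj c d) : sumIndex G ≤ 2 * Fintype.card V - 5 := by
  set n := Fintype.card V with hndef
  have h4 : 4 ≤ n := by
    have hle := Finset.card_le_univ ({a,b,c,d} : Finset V)
    have hcc : ({a,b,c,d} : Finset V).card = 4 := by
      rw [Finset.card_insert_of_notMem (by simp [hab, hac, had]),
        Finset.card_insert_of_notMem (by simp [hbc, hbd]),
        Finset.card_insert_of_notMem (by simp [hcd]), Finset.card_singleton]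
    omega
  obtain ⟨ε, hεa, hεb, hεc, hεd⟩ := exists_equiv_four a b c d hab hac had hbc hbd hcd
    ⟨0, by omega⟩ ⟨1, by omega⟩ ⟨n-2, by omega⟩ ⟨n-1, by omega⟩
    (by simp [Fin.ext_iff]) (by simp [Fin.ext_iff]; omega) (by simp [Fin.ext_iff]; omega)
    (by simp [Fin.ext_iff]; omega) (by simp [Fin.ext_iff]; omega) (by simp [Fin.ext_iff]; omega)
  have hcard : (Finset.Icc (2:ℤ) (2*(n:ℤ)-4)).card = 2*n-5 := by
    rw [Int.card_Icc]; omega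
  rw [← hcard]
  apply ub_core G ε
  intro u v hadj
  have hεne : (ε u : ℕ) ≠ (ε v : ℕ) := fun h => hadj.ne (ε.injective (Fin.ext h))
  have hu : (ε u : ℕ) < n := (ε u).isLt
  have hv : (ε v : ℕ) < n := (ε v).isLt
  have keya : ∀ w : V, (ε w : ℕ) = 0 → w = a := fun w hw =>
    ε.injective (Fin.ext (by simp [hw, hεa]))
  have keyb : ∀ w : V, (ε w : ℕ) = 1 → w = b := fun w hw =>
    ε.injective (Fin.ext (by simp [hw, hεb]))
  have keyc : ∀ w : V, (ε w : ℕ) = n - 2 → w = c := fun w hw =>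
    ε.injective (Fin.ext (by simp [hw, hεc]))
  have keyd : ∀ w : V, (ε w : ℕ) = n - 1 → w = d := fun w hw =>
    ε.injective (Fin.ext (by simp [hw, hεd]))
  have hsum1 : ¬ ((ε u : ℕ) + (ε v : ℕ) ≤ 1) := by
    intro hle
    rcases (by omega : ((ε u:ℕ) = 0 ∧ (ε v:ℕ) = 1) ∨ ((ε u:ℕ) = 1 ∧ (ε v:ℕ) = 0)) with
      ⟨hA, hB⟩ | ⟨hA, hB⟩
    · obtain rfl : u = a := keya u hA
      obtain rfl : v = b := keyb v hB
      exact h1 hadj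
    · obtain rfl : v = a := keya v hB
      obtain rfl : u = b := keyb u hA
      exact h1 hadj.symm
  have hsum2 : ¬ (2*n - 3 ≤ (ε u : ℕ) + (ε v : ℕ)) := by
    intro hle
    rcases (by omega : ((ε u:ℕ) = n-2 ∧ (ε v:ℕ) = n-1) ∨ ((ε u:ℕ) = n-1 ∧ (ε v:ℕ) = n-2)) with
      ⟨hA, hB⟩ | ⟨hA, hB⟩
    · obtain rfl : u = c := keyc u hA
      obtain rfl : v = d := keyd v hB
      exact h2 hadj
    · obtain rfl : v = c := keyc v hB
      obtain rfl : u = d := keyd u hA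
      exact h2 hadj.symm
  constructor <;> omega

lemma ub_two_nonedges (G : SimpleGraph V) (a b c d : V) (hab : a ≠ b) (hcd : c ≠ d)
    (hpair : s(a,b) ≠ s(c,d)) (h1 : ¬ G.Adj a b) (h2 : ¬ G.Adj c d) :
    sumIndex G ≤ 2 * Fintype.card V - 5 := by
  by_cases hac : a = c
  · subst hac
    have hbd : b ≠ d := fun h => hpair (by rw [h])
    exact ub_shared G a b d hab hcd hbd h1 h2
  by_cases had : a = d
  · subst had
    have hbc : b ≠ c := fun h => hpair (by rw [h, Sym2.eq_swap])
    exact ub_shared G a b c hab (Ne.symm (fun h => hac h.symm)) hbc h1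
      (fun h => h2 h.symm)
  by_cases hbc : b = c
  · subst hbc
    exact ub_shared G b a d hab.symm hcd had (fun h => h1 h.symm) h2
  by_cases hbd : b = d
  · subst hbd
    exact ub_shared G b a c hab.symm hbc hac
      (fun h => h1 h.symm) (fun h => h2 h.symm)
  · exact ub_disjoint G a b c d hab hac had hbc hbd hcd h1 h2

lemma sumIndex_top (hn : 2 ≤ Fintype.card V) :
    sumIndex (⊤ : SimpleGraph V) = 2 * Fintype.card V - 3 :=
  le_antisymm (ub_top _ hn) (lb_top hn)

lemma sumIndex_del (hn : 2 ≤ Fintype.card V) (e0 : Sym2 V)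
    (he : e0 ∈ (⊤ : SimpleGraph V).edgeSet) :
    sumIndex ((⊤ : SimpleGraph V).deleteEdges {e0}) = 2 * Fintype.card V - 4 := by
  refine le_antisymm ?_ (lb_del hn e0)
  induction e0 using Sym2.ind with
  | _ a b =>
    rw [SimpleGraph.mem_edgeSet, SimpleGraph.top_adj] at he
    refine ub_nonedge _ hn a b he ?_
    rw [SimpleGraph.deleteEdges_adj]
    rintro ⟨-, hmem⟩
    exact hmem rfl

lemma exists_nonedge (G : SimpleGraph V) (hG : G ≠ ⊤) :
    ∃ a b : V, a ≠ b ∧ ¬ G.Adj a b := by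
  by_contra h
  push_neg at h
  apply hG
  ext u v
  simp only [SimpleGraph.top_adj]
  exact ⟨fun hadj => hadj.ne, h u v⟩

lemma card_three_of_pairs (a b c d : V) (hab : a ≠ b) (hcd : c ≠ d)
    (hpair : s(a,b) ≠ s(c,d)) : 3 ≤ Fintype.card V := by
  by_contra h
  push_neg at h
  have key : ∀ x : V, x = a ∨ x = b := by
    intro x
    by_contra hx
    push_neg at hx
    have hcc : ({x,a,b} : Finset V).card = 3 := by
      rw [Finset.card_insert_of_notMem (by simp [hx.1, hx.2]),
        Finset.card_insert_of_notMem (by simp [hab]), Finset.card_singleton]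
    have := Finset.card_le_univ ({x,a,b} : Finset V)
    omega
  rcases key c with rfl | rfl <;> rcases key d with rfl | rfl
  · exact hcd rfl
  · exact hpair rfl
  · exact hpair Sym2.eq_swap
  · exact hcd rfl

end Aux

theorem stmt10 {V : Type*} [Fintype V] [DecidableEq V] (G : SimpleGraph V)
    (hn : 2 ≤ Fintype.card V) :
    (sumIndex G = 2 * Fintype.card V - 3 ↔ G = ⊤) ∧
    (sumIndex G = 2 * Fintype.card V - 4 ↔
      ∃ e ∈ (⊤ : SimpleGraph V).edgeSet, G = (⊤ : SimpleGraph V).deleteEdges {e}) := by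
  constructor
  · constructor
    · intro h
      by_contra hG
      obtain ⟨a, b, hab, hnadj⟩ := exists_nonedge G hG
      have := ub_nonedge G hn a b hab hnadj
      omega
    · rintro rfl
      exact sumIndex_top hn
  · constructor
    · intro h
      have hG : G ≠ ⊤ := by
        rintro rfl
        rw [sumIndex_top hn] at h
        omega
      obtain ⟨a, b, hab, hnadj⟩ := exists_nonedge G hG
      refine ⟨s(a,b), (SimpleGraph.mem_edgeSet _).2 (by simpa using hab), ?_⟩
      by_contra hne
      have hle : G ≤ (⊤ : SimpleGraph V).deleteEdges {s(a,b)} := by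
        intro u v huv
        rw [SimpleGraph.deleteEdges_adj]
        refine ⟨by simpa using huv.ne, ?_⟩
        simp only [Set.mem_singleton_iff]
        intro hcontra
        rw [Sym2.eq_iff] at hcontra
        rcases hcontra with ⟨rfl, rfl⟩ | ⟨rfl, rfl⟩
        · exact hnadj huv
        · exact hnadj huv.symm
      have hexists : ∃ c d : V, ((⊤ : SimpleGraph V).deleteEdges {s(a,b)}).Adj c d ∧
          ¬ G.Adj c d := by
        by_contra hcon
        push_neg at hcon
        exact hne (le_antisymm hle (fun u v huv => hcon u v huv))
      obtain ⟨c, d, hDadj, hGnadj⟩ := hexists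
      rw [SimpleGraph.deleteEdges_adj] at hDadj
      have hcd : c ≠ d := hDadj.1.ne
      have hpair : s(a,b) ≠ s(c,d) := fun hh => hDadj.2 (by rw [hh]; rfl)
      have h3 := card_three_of_pairs a b c d hab hcd hpair
      have := ub_two_nonedges G c d a b hcd hab hpair.symm hGnadj hnadj
      omega
    · rintro ⟨e, he, rfl⟩
      exact sumIndex_del hn e he
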